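/- Let R be a finite ring with 1, A a finite faithful R-module, and ω a unit of R generating a commutative subring with 1. For a ∈ A define L_a : A → A by L_a(x) = ωx + (1−ω)a, and r(a,b) = (L_a(b), L_b⁻¹(a)). Then the following are equivalent: (a) (A,r) is a non-degenerate involutive square-free solution of the YBE; (b) the maps L_a, a ∈ A, pairwise commute; (c) (1−ω)² = 0. Moreover, in this case and when ω ≠ 1, the solution has multipermutation level 2. -/
import Mathlib


namespace YBPaper

variable {X : Type*}

/-- Left translation: `lact r x y = ˣy`. -/
def lact (r : X × X → X × X) (x y : X) : X := (r (x, y)).1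

/-- Right translation: `ract r x y = xʸ`. -/
def ract (r : X × X → X × X) (x y : X) : X := (r (x, y)).2

def r12 (r : X × X → X × X) : X × X × X → X × X × X :=
  fun p => ((r (p.1, p.2.1)).1, (r (p.1, p.2.1)).2, p.2.2)

def r23 (r : X × X → X × X) : X × X × X → X × X × X :=
  fun p => (p.1, r (p.2.1, p.2.2))

/-- A non-degenerate involutive square-free set-theoretic solution of the YBE. -/
structure IsSquareFreeSolution (r : X × X → X × X) : Prop where
  nondegL : ∀ x : X, Function.Bijective fun y => (r (x, y)).1
  nondegR : ∀ y : X, Function.Bijective fun x => (r (x, y)).2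
  invol : ∀ p : X × X, r (r p) = p
  sqfree : ∀ x : X, r (x, x) = (x, x)
  braided : ∀ p : X × X × X, r12 r (r23 r (r12 r p)) = r23 r (r12 r (r23 r p))

/-- `relk l k x y` means the images of `x` and `y` in the `k`-th retract coincide. -/
def relk (l : X → X → X) : ℕ → X → X → Prop
  | 0 => fun x y => x = y
  | (k+1) => fun x y => ∀ z : X, relk l k (l x z) (l y z)

/-- `mplLe l m` : the `m`-th retract is a one-element solution, i.e. `mpl ≤ m`. -/
def mplLe (l : X → X → X) (m : ℕ) : Prop := ∀ x y : X, relk l m x y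

/-- `mplEq l m` : the multipermutation level is exactly `m`. -/
def mplEq (l : X → X → X) (m : ℕ) : Prop := mplLe l m ∧ ∀ k < m, ¬ mplLe l k

/-- The set of left translations, as permutations. -/
def lperms (r : X × X → X × X) : Set (Equiv.Perm X) :=
  {σ : Equiv.Perm X | ∃ x : X, ∀ y : X, σ y = (r (x, y)).1}

/-- The YB permutation group `𝒢(X,r)`, generated by the left translations. -/
def Gcal (r : X × X → X × X) : Subgroup (Equiv.Perm X) := Subgroup.closure (lperms r)


/-- The affine map `L_a(x) = ωx + (1-ω)a`. -/
def affL {R A : Type*} [Ring R] [AddCommGroup A] [Module R A] (ω : Rˣ) (a x : A) : A :=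
  (ω : R) • x + (1 - (ω : R)) • a

/-- The quadratic map `r(a,b) = (L_a(b), L_b⁻¹(a))` built from the affine maps. -/
def affR {R A : Type*} [Ring R] [AddCommGroup A] [Module R A] (ω : Rˣ) :
    A × A → A × A :=
  fun p => (affL ω p.1 p.2, affL ω⁻¹ p.2 p.1)

private lemma affL_left_inv {R A : Type*} [Ring R] [AddCommGroup A] [Module R A]
    (ω : Rˣ) (a x : A) : affL ω⁻¹ a (affL ω a x) = x := by
  simp only [affL, smul_add, smul_sub, sub_smul, add_smul, one_smul, smul_smul,
    Units.inv_mul, Units.mul_inv, mul_one, mul_sub]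
  abel

private lemma affL_right_inv {R A : Type*} [Ring R] [AddCommGroup A] [Module R A]
    (ω : Rˣ) (a x : A) : affL ω a (affL ω⁻¹ a x) = x := by
  simpa using affL_left_inv ω⁻¹ a x

private lemma inv_coe_eq {R : Type*} [Ring R] (ω : Rˣ) (h : (1 - (ω : R)) ^ 2 = 0) :
    ((ω⁻¹ : Rˣ) : R) = 2 - (ω : R) := by
  have key : (ω : R) * (2 - (ω : R)) = 1 - (1 - (ω : R)) * (1 - (ω : R)) := by noncomm_ring
  rw [pow_two] at h
  exact Units.inv_eq_of_mul_eq_one_right (by rw [key, h, sub_zero])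

/-- `(A, r)` is a square-free solution iff the `L_a` pairwise commute
iff `(1-ω)² = 0`; and in that case, when `ω ≠ 1`, the solution has `mpl = 2`. -/
theorem stmt16 {R A : Type*} [Ring R] [Finite R] [AddCommGroup A] [Module R A]
    [Finite A] [FaithfulSMul R A] (ω : Rˣ) :
    (IsSquareFreeSolution (affR (A := A) ω) ↔ (1 - (ω : R)) ^ 2 = 0) ∧
    ((∀ a b x : A, affL ω a (affL ω b x) = affL ω b (affL ω a x)) ↔
        (1 - (ω : R)) ^ 2 = 0) ∧
    ((1 - (ω : R)) ^ 2 = 0 → (ω : R) ≠ 1 → mplEq (lact (affR (A := A) ω)) 2) := by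
  refine ⟨⟨?_, ?_⟩, ⟨?_, ?_⟩, fun h hω1 => ⟨?_, ?_⟩⟩
  · -- (a) → (c)
    intro hsol
    refine FaithfulSMul.eq_of_smul_eq_smul (fun a : A => ?_)
    have h1 := congrArg Prod.fst (hsol.invol (a, 0))
    simp only [affR, affL, smul_zero, add_zero, zero_add, smul_add, smul_smul,
      Units.mul_inv, one_smul] at h1
    rw [pow_two, zero_smul]
    have h2 : ((1 - (ω : R)) * (1 - (ω : R))) • a = 0 := by
      have := congrArg (fun u => u - a) h1
      simpa using this
    exact h2
  · -- (c) → (a)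
    intro h
    obtain ⟨t, ht⟩ : ∃ t : R, 1 - (ω : R) = t := ⟨_, rfl⟩
    have ht2 : t * t = 0 := by rw [← ht, ← pow_two]; exact h
    have hω : (ω : R) = 1 - t := by rw [← ht]; noncomm_ring
    have hv : ((ω⁻¹ : Rˣ) : R) = 1 + t := by
      rw [inv_coe_eq ω h, ← ht, add_sub, one_add_one_eq_two]
    refine ⟨?_, ?_, ?_, ?_, ?_⟩
    · intro x
      exact Function.bijective_iff_has_inverse.mpr
        ⟨affL ω⁻¹ x, fun y => affL_left_inv ω x y, fun y => affL_right_inv ω x y⟩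
    · intro y
      exact Function.bijective_iff_has_inverse.mpr
        ⟨affL ω y, fun x => affL_right_inv ω y x, fun x => affL_left_inv ω y x⟩
    · rintro ⟨a, b⟩
      simp only [affR, affL, hω, hv, Prod.mk.injEq, smul_add, smul_sub, sub_smul,
        add_smul, one_smul, smul_smul, mul_sub, sub_mul, mul_add, add_mul, mul_one,
        one_mul, ht2, zero_smul, sub_zero, add_zero, zero_add, zero_sub, sub_self,
        smul_zero, neg_smul, smul_neg, sub_sub_cancel]
      refine ⟨by abel, by abel⟩
    · intro x
      simp only [affR, affL, Prod.mk.injEq, sub_smul, one_smul]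
      refine ⟨by abel, by abel⟩
    · rintro ⟨x, y, z⟩
      simp only [r12, r23, affR, affL, hω, hv, Prod.mk.injEq, smul_add, smul_sub,
        sub_smul, add_smul, one_smul, smul_smul, mul_sub, sub_mul, mul_add, add_mul,
        mul_one, one_mul, ht2, zero_smul, sub_zero, add_zero, zero_add, zero_sub,
        sub_self, smul_zero, neg_smul, smul_neg, sub_sub_cancel]
      refine ⟨by abel, by abel, by abel⟩
  · -- (b) → (c)
    intro hc
    have key : (1 - (ω : R)) = (ω : R) * (1 - (ω : R)) :=
      FaithfulSMul.eq_of_smul_eq_smul (fun a : A => by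
        have h0 := hc a 0 0
        simpa [affL, smul_zero, zero_add, add_zero, smul_smul, smul_add] using h0)
    have e : (1 - (ω : R)) * (1 - (ω : R))
        = (1 - (ω : R)) - (ω : R) * (1 - (ω : R)) := by noncomm_ring
    rw [pow_two, e, ← key, sub_self]
  · -- (c) → (b)
    intro h a b x
    obtain ⟨t, ht⟩ : ∃ t : R, 1 - (ω : R) = t := ⟨_, rfl⟩
    have ht2 : t * t = 0 := by rw [← ht, ← pow_two]; exact h
    have hω : (ω : R) = 1 - t := by rw [← ht]; noncomm_ring
    simp only [affL, hω, smul_add, smul_sub, sub_smul, add_smul, one_smul, smul_smul,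
      mul_sub, sub_mul, mul_one, one_mul, ht2, zero_smul, sub_zero, sub_self, smul_zero,
      sub_sub_cancel]
    abel
  · -- mpl ≤ 2
    intro x y
    obtain ⟨t, ht⟩ : ∃ t : R, 1 - (ω : R) = t := ⟨_, rfl⟩
    have ht2 : t * t = 0 := by rw [← ht, ← pow_two]; exact h
    have hω : (ω : R) = 1 - t := by rw [← ht]; noncomm_ring
    intro z z'
    show lact (affR (A := A) ω) (lact (affR (A := A) ω) x z) z'
        = lact (affR (A := A) ω) (lact (affR (A := A) ω) y z) z'
    simp only [lact, affR, affL, hω, smul_add, smul_sub, sub_smul, add_smul, one_smul,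
      smul_smul, mul_sub, sub_mul, mul_one, one_mul, ht2, zero_smul, sub_zero, sub_self,
      smul_zero, sub_sub_cancel]
  · -- no smaller level
    intro k hk hle
    have htne : (1 - (ω : R)) ≠ 0 := sub_ne_zero_of_ne (Ne.symm hω1)
    have hane : ∃ a : A, (1 - (ω : R)) • a ≠ 0 := by
      by_contra hcon
      push_neg at hcon
      exact htne (FaithfulSMul.eq_of_smul_eq_smul (fun a : A => by
        rw [hcon a, zero_smul]))
    obtain ⟨a, ha⟩ := hane
    interval_cases k
    · exact ha (hle ((1 - (ω : R)) • a) 0)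
    · have h1 := hle a 0 0
      simp only [relk, lact, affR, affL, smul_zero, zero_add, add_zero] at h1
      exact ha h1

end YBPaper
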